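/- arXiv:1201.1870 — 2 statements merged into one kernel-verified Lean document; each statement's English description precedes it below -/
import Mathlib

section
/- The subsets F of a hypergraph's edge set M for which the family (U_f)_{f∈F} admits a forest representative system form the independent sets of a matroid on M. -/
open Finset
open scoped Classical

section MyGraphLemmas

open SimpleGraph

variable {V : Type}

lemma myAcyclicAnti {G H : SimpleGraph V} (h : H ≤ G) (hG : G.IsAcyclic) : H.IsAcyclic :=
  fun _ c hc => hG (c.mapLe h) (hc.mapLe h)

lemma myBotCardCC [Fintype V] :
    Nat.card (⊥ : SimpleGraph V).ConnectedComponent = Fintype.card V := by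
  have e : (⊥ : SimpleGraph V).ConnectedComponent ≃ V := by
    refine ⟨ConnectedComponent.lift id fun v w p hp => ?_, (⊥ : SimpleGraph V).connectedComponentMk,
      ?_, fun v => rfl⟩
    · cases p with
      | nil => rfl
      | cons h q => exact absurd h (by simp)
    · intro c
      induction c using ConnectedComponent.ind with
      | _ v => rfl
  rw [Nat.card_congr e, Nat.card_eq_fintype_card]

lemma myCardLtOfSurj {α β : Type} [Finite α] (f : α → β) (hf : Function.Surjective f)
    {x y : α} (hxy : x ≠ y) (hfxy : f x = f y) : Nat.card β < Nat.card α := by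
  have h1 : Nat.card β ≤ Nat.card (({x}ᶜ : Set α)) := by
    refine Nat.card_le_card_of_surjective (fun z => f z.1) ?_
    intro b
    obtain ⟨a, rfl⟩ := hf b
    by_cases hax : a = x
    · subst hax; exact ⟨⟨y, by simp [hxy.symm]⟩, hfxy.symm⟩
    · exact ⟨⟨a, by simp [hax]⟩, rfl⟩
  have h2 : (({x}ᶜ : Set α)).ncard < (Set.univ : Set α).ncard := by
    refine Set.ncard_lt_ncard ?_ Set.finite_univ
    refine ⟨Set.subset_univ _, fun hs => ?_⟩
    simpa using hs (Set.mem_univ x)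
  rw [Set.ncard_univ] at h2
  calc Nat.card β ≤ _ := h1
    _ = (({x}ᶜ : Set α)).ncard := Nat.card_coe_set_eq _
    _ < Nat.card α := h2

/-- surgery: a walk in `G` yields reachability info in `G.deleteEdges {s(a,b)}`. -/
lemma myReachDelete {G : SimpleGraph V} {a b v w : V} (p : G.Walk v w) :
    (G.deleteEdges {s(a,b)}).Reachable v w ∨
    ((G.deleteEdges {s(a,b)}).Reachable v a ∧ (G.deleteEdges {s(a,b)}).Reachable b w) ∨
    ((G.deleteEdges {s(a,b)}).Reachable v b ∧ (G.deleteEdges {s(a,b)}).Reachable a w) := by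
  set H := G.deleteEdges {s(a,b)} with hH
  induction p with
  | nil => exact Or.inl (Reachable.refl _)
  | @cons u x w huv q ih =>
    by_cases he : s(u, x) = s(a, b)
    · rw [Sym2.eq_iff] at he
      rcases he with ⟨rfl, rfl⟩ | ⟨rfl, rfl⟩
      · rcases ih with h | ⟨h1, h2⟩ | ⟨h1, h2⟩
        · exact Or.inr (Or.inl ⟨Reachable.refl _, h⟩)
        · exact Or.inr (Or.inl ⟨Reachable.refl _, h2⟩)
        · exact Or.inl h2
      · rcases ih with h | ⟨h1, h2⟩ | ⟨h1, h2⟩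
        · exact Or.inr (Or.inr ⟨Reachable.refl _, h⟩)
        · exact Or.inl h2
        · exact Or.inr (Or.inr ⟨Reachable.refl _, h2⟩)
    · have hadj : H.Adj u x := by
        rw [hH, deleteEdges_adj]
        exact ⟨huv, by simpa using he⟩
      rcases ih with h | ⟨h1, h2⟩ | ⟨h1, h2⟩
      · exact Or.inl (hadj.reachable.trans h)
      · exact Or.inr (Or.inl ⟨hadj.reachable.trans h1, h2⟩)
      · exact Or.inr (Or.inr ⟨hadj.reachable.trans h1, h2⟩)

lemma myMkEqOfWalk {G H : SimpleGraph V} (h : ∀ u v, H.Adj u v → G.Reachable u v)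
    {v w : V} (p : H.Walk v w) :
    G.connectedComponentMk v = G.connectedComponentMk w := by
  induction p with
  | nil => rfl
  | cons hadj q ih => exact (ConnectedComponent.sound (h _ _ hadj)).trans ih

/-- the canonical map on connected components induced by reachability-domination. -/
noncomputable def myCCMap {G H : SimpleGraph V} (h : ∀ u v, H.Adj u v → G.Reachable u v) :
    H.ConnectedComponent → G.ConnectedComponent :=
  ConnectedComponent.lift (fun v => G.connectedComponentMk v)
    (fun v w p _ => myMkEqOfWalk h p)

lemma myCCMap_mk {G H : SimpleGraph V} (h : ∀ u v, H.Adj u v → G.Reachable u v) (v : V) :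
    myCCMap h (H.connectedComponentMk v) = G.connectedComponentMk v :=
  rfl

lemma myCCMap_surj {G H : SimpleGraph V} (h : ∀ u v, H.Adj u v → G.Reachable u v) :
    Function.Surjective (myCCMap h) := by
  intro c
  induction c using ConnectedComponent.ind with
  | _ v => exact ⟨H.connectedComponentMk v, rfl⟩

lemma myCardCCLe [Fintype V] {G H : SimpleGraph V} (h : ∀ u v, H.Adj u v → G.Reachable u v) :
    Nat.card G.ConnectedComponent ≤ Nat.card H.ConnectedComponent :=
  Nat.card_le_card_of_surjective _ (myCCMap_surj h)

/-- deleting one edge increases the number of components by at most one. -/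
lemma myDeleteCCLe [Fintype V] (G : SimpleGraph V) (a b : V) :
    Nat.card (G.deleteEdges {s(a,b)}).ConnectedComponent ≤
      Nat.card G.ConnectedComponent + 1 := by
  set H := G.deleteEdges {s(a,b)} with hH
  have hle : ∀ u v, H.Adj u v → G.Reachable u v := by
    intro u v huv
    exact ((deleteEdges_le {s(a,b)}) huv).reachable
  set φ := myCCMap hle with hφ
  have key : ∀ x y : V, φ (H.connectedComponentMk x) = φ (H.connectedComponentMk y) →
      H.connectedComponentMk x ≠ H.connectedComponentMk b →
      H.connectedComponentMk y ≠ H.connectedComponentMk b →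
      H.connectedComponentMk x = H.connectedComponentMk y := by
    intro x y hxy hx hy
    have hr : G.Reachable x y := ConnectedComponent.exact hxy
    obtain ⟨p⟩ := hr
    rcases myReachDelete (a := a) (b := b) p with hr' | ⟨h1, h2⟩ | ⟨h1, h2⟩
    · exact ConnectedComponent.sound hr'
    · exact absurd (ConnectedComponent.sound h2.symm) hy
    · exact absurd (ConnectedComponent.sound h1) hx
  have key' : ∀ c d : H.ConnectedComponent, φ c = φ d →
      c ≠ H.connectedComponentMk b → d ≠ H.connectedComponentMk b → c = d :=
    ConnectedComponent.ind₂ key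
  have hinj : Function.Injective (fun c : H.ConnectedComponent =>
      if c = H.connectedComponentMk b then (Sum.inr () : G.ConnectedComponent ⊕ Unit)
      else Sum.inl (φ c)) := by
    intro c d hcd
    simp only at hcd
    by_cases hc : c = H.connectedComponentMk b <;>
      by_cases hd : d = H.connectedComponentMk b
    · rw [hc, hd]
    · rw [if_pos hc, if_neg hd] at hcd; exact absurd hcd (by simp)
    · rw [if_neg hc, if_pos hd] at hcd; exact absurd hcd (by simp)
    · rw [if_neg hc, if_neg hd] at hcd; exact key' c d (Sum.inl.inj hcd) hc hd
  calc Nat.card H.ConnectedComponent ≤ Nat.card (G.ConnectedComponent ⊕ Unit) :=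
        Nat.card_le_card_of_injective _ hinj
    _ = Nat.card G.ConnectedComponent + 1 := by rw [Nat.card_sum]; simp

lemma myLower [Fintype V] : ∀ (n : ℕ) (G : SimpleGraph V), G.edgeSet.ncard = n →
    Fintype.card V ≤ n + Nat.card G.ConnectedComponent := by
  intro n
  induction n with
  | zero =>
    intro G hG
    rw [Set.ncard_eq_zero (Set.toFinite _), edgeSet_eq_empty] at hG
    subst hG
    rw [zero_add, myBotCardCC]
  | succ n ih =>
    intro G hG
    have hne : G.edgeSet.Nonempty := by
      rw [Set.nonempty_iff_ne_empty]; intro h; rw [h] at hG; simp at hG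
    obtain ⟨e, he⟩ := hne
    induction e using Sym2.ind with
    | _ a b =>
      have h1 : (G.deleteEdges {s(a,b)}).edgeSet.ncard = n := by
        rw [edgeSet_deleteEdges, Set.ncard_diff_singleton_of_mem he, hG]; omega
      have h2 := ih _ h1
      have h3 := myDeleteCCLe G a b
      omega

lemma myBridgeLt [Fintype V] {G : SimpleGraph V} {a b : V} (hadj : G.Adj a b)
    (hnr : ¬ (G.deleteEdges {s(a,b)}).Reachable a b) :
    Nat.card G.ConnectedComponent < Nat.card (G.deleteEdges {s(a,b)}).ConnectedComponent := by
  set H := G.deleteEdges {s(a,b)} with hH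
  have hle : ∀ u v, H.Adj u v → G.Reachable u v := fun u v huv =>
    ((deleteEdges_le {s(a,b)}) huv).reachable
  refine myCardLtOfSurj (myCCMap hle) (myCCMap_surj hle)
    (x := H.connectedComponentMk a) (y := H.connectedComponentMk b) ?_ ?_
  · intro h
    exact hnr (ConnectedComponent.exact h)
  · rw [myCCMap_mk, myCCMap_mk]
    exact ConnectedComponent.sound hadj.reachable

lemma myUpper [Fintype V] : ∀ (n : ℕ) (G : SimpleGraph V), G.IsAcyclic → G.edgeSet.ncard = n →
    n + Nat.card G.ConnectedComponent ≤ Fintype.card V := by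
  intro n
  induction n with
  | zero =>
    intro G _ hG
    rw [Set.ncard_eq_zero (Set.toFinite _), edgeSet_eq_empty] at hG
    subst hG
    rw [zero_add, myBotCardCC]
  | succ n ih =>
    intro G hac hG
    have hne : G.edgeSet.Nonempty := by
      rw [Set.nonempty_iff_ne_empty]; intro h; rw [h] at hG; simp at hG
    obtain ⟨e, he⟩ := hne
    induction e using Sym2.ind with
    | _ a b =>
      have hadj : G.Adj a b := he
      have hbr : G.IsBridge s(a,b) := isAcyclic_iff_forall_adj_isBridge.mp hac hadj
      have hnr : ¬ (G.deleteEdges {s(a,b)}).Reachable a b := isBridge_iff.mp hbr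
      have h1 : (G.deleteEdges {s(a,b)}).edgeSet.ncard = n := by
        rw [edgeSet_deleteEdges, Set.ncard_diff_singleton_of_mem he, hG]; omega
      have h2 := ih _ (myAcyclicAnti (deleteEdges_le _) hac) h1
      have h3 := myBridgeLt hadj hnr
      omega

/-- Adding an edge between two non-reachable vertices keeps a graph acyclic. -/
lemma myAcyclicInsert {G : SimpleGraph V} {a b : V} (hG : G.IsAcyclic)
    (hr : ¬ G.Reachable a b) : (G ⊔ fromEdgeSet {s(a,b)}).IsAcyclic := by
  have hab : a ≠ b := fun h => hr (h ▸ Reachable.refl a)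
  intro v c hc
  by_cases he : s(a,b) ∈ c.edges
  · have := (adj_and_reachable_delete_edges_iff_exists_cycle
      (G := G ⊔ fromEdgeSet {s(a,b)}) (v := a) (w := b)).mpr ⟨v, c, hc, he⟩
    refine hr (this.2.mono ?_)
    intro u w huw
    rcases huw.1 with h | h
    · exact h
    · exact absurd h huw.2
  · have hsub : ∀ e ∈ c.edges, e ∈ G.edgeSet := by
      intro e hec
      have := c.edges_subset_edgeSet hec
      rw [edgeSet_sup, edgeSet_fromEdgeSet] at this
      rcases this with h | h
      · exact h
      · exact absurd h.1 (by rintro rfl; exact he hec)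
    exact hG (c.transfer G hsub) (hc.transfer hsub)

/-- The exchange property for forests given as finsets of non-diagonal `Sym2`s. -/
lemma myForestExchange [Fintype V] (E E' : Finset (Sym2 V))
    (hE : ∀ s ∈ E, ¬ s.IsDiag) (hE' : ∀ s ∈ E', ¬ s.IsDiag)
    (hac : (fromEdgeSet (E : Set (Sym2 V))).IsAcyclic)
    (hac' : (fromEdgeSet (E' : Set (Sym2 V))).IsAcyclic)
    (hcard : E.card < E'.card) :
    ∃ s ∈ E', s ∉ E ∧ (fromEdgeSet ((insert s E : Finset (Sym2 V)) : Set (Sym2 V))).IsAcyclic := by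
  by_contra hcon
  push_neg at hcon
  have claim : ∀ u v : V, (fromEdgeSet (E' : Set (Sym2 V))).Adj u v →
      (fromEdgeSet (E : Set (Sym2 V))).Reachable u v := by
    intro u v huv
    rw [fromEdgeSet_adj] at huv
    obtain ⟨hmem, hne⟩ := huv
    by_cases hsE : s(u,v) ∈ E
    · exact ((fromEdgeSet_adj _).mpr ⟨by exact_mod_cast hsE, hne⟩).reachable
    · by_contra hnr
      refine hcon s(u,v) (by exact_mod_cast hmem) hsE ?_
      have : (fromEdgeSet ((insert s(u,v) E : Finset (Sym2 V)) : Set (Sym2 V))) =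
          fromEdgeSet (E : Set (Sym2 V)) ⊔ fromEdgeSet {s(u,v)} := by
        rw [Finset.coe_insert, Set.insert_eq, Set.union_comm, fromEdgeSet_union]
      rw [this]
      exact myAcyclicInsert hac hnr
  have h1 : Nat.card (fromEdgeSet (E : Set (Sym2 V))).ConnectedComponent ≤
      Nat.card (fromEdgeSet (E' : Set (Sym2 V))).ConnectedComponent := myCardCCLe claim
  have hEcard : (fromEdgeSet (E : Set (Sym2 V))).edgeSet.ncard = E.card := by
    have hdiff : ((E : Set (Sym2 V)) \ Sym2.diagSet) = E :=
      Set.ext fun e => ⟨fun h => h.1, fun h => ⟨h, hE e (by exact_mod_cast h)⟩⟩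
    rw [edgeSet_fromEdgeSet, hdiff, Set.ncard_coe_finset]
  have hE'card : (fromEdgeSet (E' : Set (Sym2 V))).edgeSet.ncard = E'.card := by
    have hdiff : ((E' : Set (Sym2 V)) \ Sym2.diagSet) = E' :=
      Set.ext fun e => ⟨fun h => h.1, fun h => ⟨h, hE' e (by exact_mod_cast h)⟩⟩
    rw [edgeSet_fromEdgeSet, hdiff, Set.ncard_coe_finset]
  have h2 := myLower E.card (fromEdgeSet (E : Set (Sym2 V))) hEcard
  have h3 := myUpper E'.card (fromEdgeSet (E' : Set (Sym2 V))) hac' hE'card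
  omega

end MyGraphLemmas

/-- `(e f)_{f ∈ F}` is a forest representative system for `(Uf f)_{f ∈ F}`:
pairwise distinct 2-element subsets `e f ⊆ Uf f` whose union is a forest. -/
def IsFRS {U M : Type} [DecidableEq U] (Uf : M → Finset U) (F : Finset M)
    (e : M → Sym2 U) : Prop :=
  (∀ f ∈ F, ¬ (e f).IsDiag ∧ ∀ x ∈ e f, x ∈ Uf f) ∧
  Set.InjOn e ↑F ∧
  (SimpleGraph.fromEdgeSet {s | ∃ f ∈ F, e f = s}).IsAcyclic

lemma frs_edgeSet_eq {U M : Type} [DecidableEq U] [DecidableEq M] (F : Finset M)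
    (e : M → Sym2 U) :
    {s : Sym2 U | ∃ f ∈ F, e f = s} = ((F.image e : Finset (Sym2 U)) : Set (Sym2 U)) := by
  ext s
  simp [eq_comm]

lemma frs_subset {U M : Type} [DecidableEq U] {Uf : M → Finset U} {F G : Finset M}
    {e : M → Sym2 U} (h : IsFRS Uf G e) (hFG : F ⊆ G) : IsFRS Uf F e := by
  obtain ⟨h1, h2, h3⟩ := h
  refine ⟨fun f hf => h1 f (hFG hf), h2.mono (by exact_mod_cast hFG), ?_⟩
  refine myAcyclicAnti (SimpleGraph.fromEdgeSet_mono ?_) h3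
  rintro s ⟨f, hf, rfl⟩
  exact ⟨f, hFG hf, rfl⟩

lemma frs_aug {U M : Type} [Fintype U] [Fintype M] [DecidableEq U] [DecidableEq M]
    (Uf : M → Finset U) {F G : Finset M} {e0 e' : M → Sym2 U}
    (hF : IsFRS Uf F e0) (hG : IsFRS Uf G e') (hlt : F.card < G.card) :
    ∃ m ∈ G, m ∉ F ∧ ∃ e, IsFRS Uf (insert m F) e := by
  obtain ⟨hcond', hinj', hacG⟩ := hG
  set S : Finset (M → Sym2 U) := Finset.univ.filter (fun h => IsFRS Uf F h) with hS
  have hSne : S.Nonempty := ⟨e0, by simp [hS, hF]⟩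
  obtain ⟨h, hhS, hmax⟩ :=
    S.exists_max_image (fun h => ((F ∩ G).filter (fun f => h f = e' f)).card) hSne
  obtain ⟨hcond, hinj, hacF⟩ : IsFRS Uf F h := (Finset.mem_filter.mp hhS).2
  rw [frs_edgeSet_eq] at hacF hacG
  have hndE : ∀ s ∈ F.image h, ¬ s.IsDiag := by
    intro s hs
    obtain ⟨f, hf, rfl⟩ := Finset.mem_image.mp hs
    exact (hcond f hf).1
  have hndE' : ∀ s ∈ G.image e', ¬ s.IsDiag := by
    intro s hs
    obtain ⟨f, hf, rfl⟩ := Finset.mem_image.mp hs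
    exact (hcond' f hf).1
  have hcards : (F.image h).card < (G.image e').card := by
    rw [Finset.card_image_of_injOn hinj, Finset.card_image_of_injOn hinj']
    exact hlt
  obtain ⟨s, hsE', hsnotE, hacIns⟩ :=
    myForestExchange (F.image h) (G.image e') hndE hndE' hacF hacG hcards
  obtain ⟨m, hmG, rfl⟩ := Finset.mem_image.mp hsE'
  -- the updated system works for `insert m F`
  set h2 : M → Sym2 U := fun x => if x = m then e' m else h x with hh2
  have hh2m : h2 m = e' m := by simp [hh2]
  have hh2ne : ∀ x, x ≠ m → h2 x = h x := fun x hx => by simp [hh2, hx]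
  have hP : IsFRS Uf (insert m F) h2 := by
    refine ⟨?_, ?_, ?_⟩
    · intro f hf
      by_cases hfm : f = m
      · rw [hfm, hh2m]
        exact hcond' m hmG
      · rw [hh2ne f hfm]
        exact hcond f ((Finset.mem_insert.mp hf).resolve_left hfm)
    · intro f hf g hg heq
      have hf' := Finset.mem_insert.mp (Finset.mem_coe.mp hf)
      have hg' := Finset.mem_insert.mp (Finset.mem_coe.mp hg)
      by_cases hfm : f = m <;> by_cases hgm : g = m
      · rw [hfm, hgm]
      · rw [hfm, hh2m, hh2ne g hgm] at heq
        exact absurd (Finset.mem_image.mpr ⟨g, hg'.resolve_left hgm, heq.symm⟩) hsnotE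
      · rw [hgm, hh2m, hh2ne f hfm] at heq
        exact absurd (Finset.mem_image.mpr ⟨f, hf'.resolve_left hfm, heq⟩) hsnotE
      · rw [hh2ne f hfm, hh2ne g hgm] at heq
        exact hinj (hf'.resolve_left hfm) (hg'.resolve_left hgm) heq
    · rw [frs_edgeSet_eq]
      refine myAcyclicAnti (SimpleGraph.fromEdgeSet_mono ?_) hacIns
      intro s hs
      obtain ⟨f, hf, rfl⟩ := Finset.mem_image.mp (Finset.mem_coe.mp hs)
      simp only [Finset.coe_insert, Set.mem_insert_iff, Finset.mem_coe, Finset.mem_image]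
      by_cases hfm : f = m
      · exact Or.inl (by rw [hfm, hh2m])
      · exact Or.inr ⟨f, (Finset.mem_insert.mp hf).resolve_left hfm, (hh2ne f hfm).symm ▸ rfl⟩
  by_cases hmF : m ∈ F
  · -- contradiction with maximality
    exfalso
    have hP' : IsFRS Uf F h2 :=
      frs_subset hP (Finset.subset_insert _ _)
    have hmem : h2 ∈ S := by simp [hS, hP']
    have hmne : h m ≠ e' m := by
      intro hcontra
      exact hsnotE (Finset.mem_image.mpr ⟨m, hmF, hcontra⟩)
    have hset : (F ∩ G).filter (fun f => h2 f = e' f)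
        = insert m ((F ∩ G).filter (fun f => h f = e' f)) := by
      ext f
      by_cases hfm : f = m
      · subst hfm
        simp [Finset.mem_filter, Finset.mem_inter, hmF, hmG, hh2m]
      · simp [Finset.mem_filter, hh2ne f hfm, hfm]
    have hnotmem : m ∉ (F ∩ G).filter (fun f => h f = e' f) := by
      simp [Finset.mem_filter, hmne]
    have := hmax _ hmem
    rw [hset, Finset.card_insert_of_notMem hnotmem] at this
    omega
  · exact ⟨m, hmG, hmF, _, hP⟩

theorem stmt_13 {U M : Type} [Fintype U] [Fintype M] [DecidableEq U] [DecidableEq M]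
    (Uf : M → Finset U) (hne : ∀ f, (Uf f).Nonempty) :
    ∃ Mat : Matroid M, Mat.E = Set.univ ∧
      ∀ F : Finset M, (Mat.Indep ↑F ↔ ∃ e : M → Sym2 U, IsFRS Uf F e) := by
  set eTriv : M → Sym2 U := fun f => s((hne f).choose, (hne f).choose) with heTriv
  have hFRSempty : IsFRS Uf (∅ : Finset M) eTriv := by
    refine ⟨by simp, by simp, ?_⟩
    have hes : {s : Sym2 U | ∃ f ∈ (∅ : Finset M), eTriv f = s} = ∅ := by simp
    rw [hes, SimpleGraph.fromEdgeSet_empty]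
    exact SimpleGraph.isAcyclic_bot
  set Indep : Set M → Prop := fun I => ∃ F : Finset M, ↑F = I ∧ ∃ e, IsFRS Uf F e with hIndep
  have indep_empty : Indep ∅ := ⟨∅, by simp, eTriv, hFRSempty⟩
  have indep_subset : ∀ ⦃I J⦄, Indep J → I ⊆ J → Indep I := by
    rintro I J ⟨G, rfl, e, he⟩ hIJ
    refine ⟨G.filter (fun x => x ∈ I), ?_, e, frs_subset he (Finset.filter_subset _ _)⟩
    ext x
    simp only [Finset.coe_filter, Set.mem_setOf_eq, Finset.mem_coe]
    exact ⟨fun hx => hx.2, fun hx => ⟨Finset.mem_coe.mp (hIJ hx), hx⟩⟩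
  have indep_aug : ∀ ⦃I J⦄, Indep I → Indep J → I.ncard < J.ncard →
      ∃ x ∈ J, x ∉ I ∧ Indep (insert x I) := by
    rintro I J ⟨F, rfl, eF, heF⟩ ⟨G, rfl, eG, heG⟩ hcard
    rw [Set.ncard_coe_finset, Set.ncard_coe_finset] at hcard
    obtain ⟨m, hmG, hmF, e2, he2⟩ := frs_aug Uf heF heG hcard
    refine ⟨m, Finset.mem_coe.mpr hmG, fun hc => hmF (Finset.mem_coe.mp hc), ?_⟩
    exact ⟨insert m F, by rw [Finset.coe_insert], e2, he2⟩
  refine ⟨(IndepMatroid.ofFinite Set.finite_univ Indep indep_empty indep_subset indep_aug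
    (fun I _ => Set.subset_univ I)).matroid, ?_, ?_⟩
  · simp
  · intro F
    rw [IndepMatroid.matroid_indep_iff, IndepMatroid.ofFinite_indep]
    constructor
    · rintro ⟨F', hF', e, he⟩
      exact ⟨e, Finset.coe_injective hF' ▸ he⟩
    · rintro ⟨e, he⟩
      exact ⟨F, rfl, e, he⟩
end

section
/- Let G be a connected graph, T ⊆ V(G) with |T| even, and M an eardrum in G with V_M ∩ T = ∅ and 𝒫_f ≠ ∅ for all f ∈ M. Then every connected-T-join of G has at least |V(G)| - 1 + |M| - μ(G,M) edges. -/
open Finset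
open scoped Classical

/-- A multigraph on vertex type `V` with edge index type `E`, no loops. -/
structure MGraph (V E : Type) where
  ends : E → Sym2 V
  not_loop : ∀ e, ¬ (ends e).IsDiag

namespace MGraph

variable {V E : Type} [Fintype V] [Fintype E] [DecidableEq V] [DecidableEq E]

/-- Reachability in the multi-subgraph of `2G` given by multiplicities `m`. -/
def Reach (G : MGraph V E) (m : E → ℕ) : V → V → Prop :=
  Relation.ReflTransGen (fun a b => ∃ e, 1 ≤ m e ∧ G.ends e = s(a, b))

/-- The multi-subgraph given by multiplicities `m` is spanning and connected. -/
def Conn (G : MGraph V E) (m : E → ℕ) : Prop := ∀ u v : V, G.Reach m u v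

/-- Degree of `v` in the multi-subgraph with multiplicities `m`. -/
noncomputable def deg (G : MGraph V E) (m : E → ℕ) (v : V) : ℕ :=
  ∑ e, if v ∈ G.ends e then m e else 0

/-- Number of edges (with multiplicity). -/
def size (m : E → ℕ) : ℕ := ∑ e, m e

/-- `m` is a multi-subgraph of `2G`. -/
def Sub2 (m : E → ℕ) : Prop := ∀ e, m e ≤ 2

/-- The multi-subgraph `m` is 2-edge-connected: at least two vertices, connected,
and still connected after removing any one edge copy. -/
def TwoEC (G : MGraph V E) (m : E → ℕ) : Prop :=
  2 ≤ Fintype.card V ∧ G.Conn m ∧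
    ∀ e, 1 ≤ m e → G.Conn (Function.update m e (m e - 1))

/-- A tour of `G`: a spanning connected multi-subgraph of `2G` with all degrees even. -/
def IsTour (G : MGraph V E) (m : E → ℕ) : Prop :=
  Sub2 m ∧ G.Conn m ∧ ∀ v, Even (G.deg m v)

/-- A connected-`T`-join of `G`: a `T`-join in `2G` that is spanning and connected. -/
def IsConnTJoin (G : MGraph V E) (T : Finset V) (m : E → ℕ) : Prop :=
  Sub2 m ∧ G.Conn m ∧ ∀ v, (v ∈ T ↔ Odd (G.deg m v))

/-- `G` itself is connected. -/
def Connected (G : MGraph V E) : Prop := G.Conn (fun _ => 1)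

/-- `G` itself is 2-edge-connected. -/
def TwoEdgeConnected (G : MGraph V E) : Prop := G.TwoEC (fun _ => 1)

/-- An ear is given by its vertex sequence together with its edge sequence. -/
abbrev Ear (V E : Type) := List V × List E

/-- The list of internal vertices of an ear. -/
def innList (P : Ear V E) : List V := (P.1.drop 1).dropLast

/-- The set of internal vertices of an ear. -/
def innFinset (P : Ear V E) : Finset V := (innList P).toFinset

/-- `EarOK G prev P`: `P` is a valid ear to attach to the set `prev` of previously
present vertices: consecutive listed vertices are joined by the listed edges, the
(one or two) endpoints lie in `prev`, and the internal vertices are new and distinct. -/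
def EarOK (G : MGraph V E) (prev : Set V) (P : Ear V E) : Prop :=
  P.1.length = P.2.length + 1 ∧ P.2 ≠ [] ∧ P.2.Nodup ∧
  (∀ i : ℕ, ∀ h : i < P.2.length, ∃ a b : V,
    P.1[i]? = some a ∧ P.1[i + 1]? = some b ∧ G.ends (P.2.get ⟨i, h⟩) = s(a, b)) ∧
  (∃ a, P.1.head? = some a ∧ a ∈ prev) ∧
  (∃ b, P.1.getLast? = some b ∧ b ∈ prev) ∧
  (innList P).Nodup ∧
  (∀ x ∈ innList P, x ∉ prev)

/-- The set of vertices present after attaching the given ears to the root `r`. -/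
def vertsUpTo (r : V) (ears : List (Ear V E)) : Set V :=
  insert r {x | ∃ P ∈ ears, x ∈ P.1}

/-- `ears` (attached successively to the root `r`) form an ear-decomposition of `G`. -/
def IsEarDecomp (G : MGraph V E) (r : V) (ears : List (Ear V E)) : Prop :=
  (∀ i : ℕ, ∀ h : i < ears.length,
      G.EarOK (vertsUpTo r (ears.take i)) (ears.get ⟨i, h⟩)) ∧
  vertsUpTo r ears = Set.univ ∧
  (∀ e : E, e ∈ ears.flatMap Prod.snd) ∧
  (ears.flatMap Prod.snd).Nodup

/-- An ear is nontrivial if it has length `> 1`. -/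
def Nontriv (P : Ear V E) : Prop := 2 ≤ P.2.length

/-- `Q` is attached to `P` if `Q` has an endpoint among the internal vertices of `P`. -/
def AttachedTo (P Q : Ear V E) : Prop :=
  (∃ a, Q.1.head? = some a ∧ a ∈ innList P) ∨
  (∃ a, Q.1.getLast? = some a ∧ a ∈ innList P)

/-- The `i`-th ear is pendant: nontrivial and no nontrivial ear is attached to it. -/
def PendantAt (ears : List (Ear V E)) (i : ℕ) (h : i < ears.length) : Prop :=
  Nontriv (ears.get ⟨i, h⟩) ∧
  ∀ j : ℕ, ∀ hj : j < ears.length, j ≠ i → Nontriv (ears.get ⟨j, hj⟩) →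
    ¬ AttachedTo (ears.get ⟨i, h⟩) (ears.get ⟨j, hj⟩)

/-- An ear is short if it has length 2 or 3. -/
def ShortEar (P : Ear V E) : Prop := P.2.length = 2 ∨ P.2.length = 3

/-- `φ(G)`: the minimum number of even ears in an ear-decomposition of `G`. -/
noncomputable def phi (G : MGraph V E) : ℕ :=
  sInf {n | ∃ (r : V) (ears : List (Ear V E)), G.IsEarDecomp r ears ∧
    (ears.countP fun P => decide (Even P.2.length)) = n}

/-- The vertex set of an eardrum. -/
def VM (M : Finset (Finset V)) : Finset V := M.biUnion id

/-- `M` is an eardrum in `G`: the set of components of an induced subgraph of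
maximum degree at most one. -/
def IsEardrum (G : MGraph V E) (M : Finset (Finset V)) : Prop :=
  (∀ f ∈ M, ∀ g ∈ M, f ≠ g → Disjoint f g) ∧
  (∀ f ∈ M, f.card = 1 ∨ f.card = 2) ∧
  (∀ f ∈ M, ∀ x ∈ f, ∀ y ∈ f, x ≠ y → ∃ e, G.ends e = s(x, y)) ∧
  (∀ e : E, (∀ x ∈ G.ends e, x ∈ VM M) → ∃ f ∈ M, ∀ x ∈ G.ends e, x ∈ f)

/-- `P` is a path in `G` whose set of internal vertices is exactly `f`. -/
def IsPathInn (G : MGraph V E) (f : Finset V) (P : Ear V E) : Prop :=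
  P.1.length = P.2.length + 1 ∧ P.1.Nodup ∧ P.2.Nodup ∧
  (∀ i : ℕ, ∀ h : i < P.2.length, ∃ a b : V,
    P.1[i]? = some a ∧ P.1[i + 1]? = some b ∧ G.ends (P.2.get ⟨i, h⟩) = s(a, b)) ∧
  innFinset P = f

/-- The edge set `A` forms a forest: every nonempty subset has a vertex of degree one. -/
def IsForest (G : MGraph V E) (A : Finset E) : Prop :=
  ∀ B ⊆ A, B.Nonempty → ∃ v : V, (B.filter fun e => v ∈ G.ends e).card = 1

/-- An earmuff for the eardrum `M`: paths `P f` with internal vertex set `f` for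
`f ∈ F ⊆ M`, whose union of edge sets forms a forest. -/
def IsEarmuff (G : MGraph V E) (M F : Finset (Finset V)) (P : Finset V → Ear V E) : Prop :=
  F ⊆ M ∧ (∀ f ∈ F, G.IsPathInn f (P f)) ∧
  G.IsForest (F.biUnion fun f => (P f).2.toFinset)

/-- `μ(G,M)`: the maximum size of an earmuff for `M` in `G`. -/
noncomputable def mu (G : MGraph V E) (M : Finset (Finset V)) : ℕ :=
  sSup {k | ∃ (F : Finset (Finset V)) (P : Finset V → Ear V E),
    G.IsEarmuff M F P ∧ F.card = k}

/-! ### Auxiliary development -/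

set_option linter.unusedSectionVars false

section Aux

variable {G : MGraph V E} {m : E → ℕ} {M : Finset (Finset V)}

lemma reach_symm : Symmetric (G.Reach m) :=
  fun a b h => (@Relation.ReflTransGen.stdSymm _ (fun a b => ∃ e, 1 ≤ m e ∧ G.ends e = s(a, b))
    ⟨fun _ _ ⟨e, h1, h2⟩ => ⟨e, h1, h2.trans (Sym2.eq_swap)⟩⟩).symm a b h

/-- The simple graph underlying the multisubgraph `m`. -/
def HG (G : MGraph V E) (m : E → ℕ) : SimpleGraph V where
  Adj a b := ∃ e, 1 ≤ m e ∧ G.ends e = s(a, b)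
  symm := ⟨fun _ _ ⟨e, h1, h2⟩ => ⟨e, h1, h2.trans (Sym2.eq_swap)⟩⟩
  loopless := ⟨fun a ⟨e, _, h2⟩ => G.not_loop e (by rw [h2]; exact Sym2.mk_isDiag_iff.2 rfl)⟩

lemma reach_iff {u v : V} : G.Reach m u v ↔ (HG G m).Reachable u v :=
  ((HG G m).reachable_iff_reflTransGen u v).symm

lemma mem_VM_iff {v : V} : v ∈ VM M ↔ ∃ f ∈ M, v ∈ f := by
  simp [VM, Finset.mem_biUnion]

lemma mem_VM_of {f : Finset V} {v : V} (hf : f ∈ M) (hv : v ∈ f) : v ∈ VM M :=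
  mem_VM_iff.2 ⟨f, hf, hv⟩

lemma eq_of_mem_inter (hM : G.IsEardrum M) {f g : Finset V} {v : V}
    (hf : f ∈ M) (hg : g ∈ M) (hvf : v ∈ f) (hvg : v ∈ g) : f = g := by
  by_contra h
  exact (Finset.disjoint_left.1 (hM.1 f hf g hg h) hvf) hvg

lemma not_mem_VM_side (hM : G.IsEardrum M) {f : Finset V} {u x : V} {e : E}
    (hf : f ∈ M) (hu : u ∈ f) (he : G.ends e = s(u, x)) (hx : x ∉ f) : x ∉ VM M := by
  intro hxVM
  have hall : ∀ y ∈ G.ends e, y ∈ VM M := by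
    intro y hy
    rw [he] at hy
    rcases Sym2.mem_iff.1 hy with rfl | rfl
    · exact mem_VM_of hf hu
    · exact hxVM
  obtain ⟨g, hg, hsub⟩ := hM.2.2.2 e hall
  have hug : u ∈ g := hsub u (by rw [he]; exact Sym2.mem_iff.2 (Or.inl rfl))
  have hfg : f = g := eq_of_mem_inter hM hf hg hu hug
  exact hx (hfg ▸ hsub x (by rw [he]; exact Sym2.mem_iff.2 (Or.inr rfl)))

lemma eardrum_subset (hM : G.IsEardrum M) {M' : Finset (Finset V)} (h : M' ⊆ M) :
    G.IsEardrum M' := by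
  obtain ⟨h1, h2, h3, h4⟩ := hM
  refine ⟨fun f hf g hg => h1 f (h hf) g (h hg), fun f hf => h2 f (h hf),
    fun f hf => h3 f (h hf), ?_⟩
  intro e he
  have hVM : ∀ x ∈ G.ends e, x ∈ VM M := by
    intro x hx
    obtain ⟨f, hf, hxf⟩ := mem_VM_iff.1 (he x hx)
    exact mem_VM_of (h hf) hxf
  obtain ⟨f, hf, hsub⟩ := h4 e hVM
  have hx : (G.ends e).out.1 ∈ G.ends e := Sym2.out_fst_mem _
  obtain ⟨g, hg, hxg⟩ := mem_VM_iff.1 (he _ hx)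
  have : f = g := by
    by_contra hne
    exact (Finset.disjoint_left.1 (h1 f hf g (h hg) hne) (hsub _ hx)) hxg
  exact ⟨f, this ▸ hg, hsub⟩

lemma le_deg {v : V} {e : E} (h1 : 1 ≤ m e) (hv : v ∈ G.ends e) : 1 ≤ G.deg m v := by
  have h : (if v ∈ G.ends e then m e else 0) ≤ G.deg m v := by
    unfold deg
    exact Finset.single_le_sum (f := fun e => if v ∈ G.ends e then m e else 0)
      (fun i _ => Nat.zero_le _) (Finset.mem_univ e)
  rw [if_pos hv] at h
  omega

lemma deg_update_of_not_mem {v : V} {e : E} {k : ℕ} (hv : v ∉ G.ends e) :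
    G.deg (Function.update m e k) v = G.deg m v := by
  unfold deg
  refine Finset.sum_congr rfl fun e' _ => ?_
  rcases eq_or_ne e' e with rfl | h
  · simp [hv]
  · simp [Function.update_of_ne h]

lemma size_update_succ {e : E} (h : 1 ≤ m e) :
    size (Function.update m e (m e - 1)) + 1 = size m := by
  unfold size
  have key : ∀ g : E → ℕ, ∑ x, g x = (∑ x ∈ Finset.univ.erase e, g x) + g e := by
    intro g
    rw [Finset.sum_erase_add _ _ (Finset.mem_univ e)]
  rw [key (Function.update m e (m e - 1)), key m]
  have h2 : ∑ x ∈ Finset.univ.erase e, Function.update m e (m e - 1) x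
      = ∑ x ∈ Finset.univ.erase e, m x := by
    refine Finset.sum_congr rfl fun x hx => ?_
    exact Function.update_of_ne (Finset.ne_of_mem_erase hx) _ _
  rw [h2, Function.update_self]
  omega

lemma muSet_bddAbove :
    BddAbove {k | ∃ (F : Finset (Finset V)) (P : Finset V → Ear V E),
      G.IsEarmuff M F P ∧ F.card = k} := by
  refine ⟨M.card, ?_⟩
  rintro k ⟨F, P, hE, rfl⟩
  exact Finset.card_le_card hE.1

lemma card_le_mu {F : Finset (Finset V)} {P : Finset V → Ear V E}
    (h : G.IsEarmuff M F P) : F.card ≤ G.mu M :=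
  le_csSup muSet_bddAbove ⟨F, P, h, rfl⟩

lemma muSet_zero_mem :
    (0 : ℕ) ∈ {k | ∃ (F : Finset (Finset V)) (P : Finset V → Ear V E),
      G.IsEarmuff M F P ∧ F.card = k} := by
  refine ⟨∅, fun _ => ([], []), ⟨Finset.empty_subset _, by simp, ?_⟩, by simp⟩
  intro B hB hBne
  rw [Finset.biUnion_empty] at hB
  exact absurd (Finset.subset_empty.1 hB) (Finset.nonempty_iff_ne_empty.1 hBne)

lemma mu_mono {M' : Finset (Finset V)} (h : M' ⊆ M) : G.mu M' ≤ G.mu M := by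
  refine csSup_le ⟨0, muSet_zero_mem⟩ ?_
  rintro k ⟨F, P, ⟨hFM, hp, hfor⟩, rfl⟩
  exact card_le_mu ⟨hFM.trans h, hp, hfor⟩

lemma conn_of_step_imp {m' : E → ℕ}
    (h : ∀ a b : V, (∃ e, 1 ≤ m e ∧ G.ends e = s(a, b)) → G.Reach m' a b)
    (hconn : G.Conn m) : G.Conn m' := by
  intro u v
  have h2 : Relation.ReflTransGen (G.Reach m') u v :=
    Relation.ReflTransGen.mono h u v (hconn u v)
  have h3 : Relation.ReflTransGen
      (Relation.ReflTransGen (fun a b => ∃ e, 1 ≤ m' e ∧ G.ends e = s(a, b))) u v := h2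
  rw [Relation.reflTransGen_idem] at h3
  exact h3

lemma bridge_le_one (hconn : G.Conn m)
    (hbr : ∀ e, 1 ≤ m e → ¬ G.Conn (Function.update m e (m e - 1))) (e : E) : m e ≤ 1 := by
  by_contra h
  push_neg at h
  refine hbr e (by omega) (conn_of_step_imp ?_ hconn)
  rintro a b ⟨e', he', hends⟩
  rcases eq_or_ne e' e with rfl | hne
  · exact Relation.ReflTransGen.single ⟨e', by rw [Function.update_self]; omega, hends⟩
  · exact Relation.ReflTransGen.single ⟨e', by rw [Function.update_of_ne hne]; omega, hends⟩

lemma bridge_no_par (hconn : G.Conn m)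
    (hbr : ∀ e, 1 ≤ m e → ¬ G.Conn (Function.update m e (m e - 1))) {e1 e2 : E}
    (hne : e1 ≠ e2) (h1 : 1 ≤ m e1) (h2 : 1 ≤ m e2) : G.ends e1 ≠ G.ends e2 := by
  intro heq
  refine hbr e1 h1 (conn_of_step_imp ?_ hconn)
  rintro a b ⟨e', he', hends⟩
  rcases eq_or_ne e' e1 with rfl | hne'
  · exact Relation.ReflTransGen.single
      ⟨e2, by rw [Function.update_of_ne (Ne.symm hne)]; omega, heq.symm.trans hends⟩
  · exact Relation.ReflTransGen.single
      ⟨e', by rw [Function.update_of_ne hne']; omega, hends⟩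

lemma HG_connected (hconn : G.Conn m) [Nonempty V] : (HG G m).Connected :=
  ⟨fun u v => reach_iff.1 (hconn u v)⟩

lemma shortest_avoid (Hc : (HG G m).Connected) {r z w : V}
    (hzw : (HG G m).dist r z ≤ (HG G m).dist r w) (hne : w ≠ z) :
    ∃ p : (HG G m).Walk r z, p.length = (HG G m).dist r z ∧ w ∉ p.support := by
  obtain ⟨p, hp⟩ := (Hc.preconnected r z).exists_walk_length_eq_dist
  refine ⟨p, hp, fun hmem => ?_⟩
  have h1 : (HG G m).dist r w ≤ (p.takeUntil w hmem).length := SimpleGraph.dist_le _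
  have h2 := congrArg SimpleGraph.Walk.length (p.take_spec hmem)
  rw [SimpleGraph.Walk.length_append] at h2
  have h3 : (p.dropUntil w hmem).length = 0 := by omega
  exact hne (SimpleGraph.Walk.eq_of_length_eq_zero h3)

lemma walk_reach_avoid {m' : E → ℕ} {x y : V} (p : (HG G m).Walk x y) {w z1 : V}
    (havoid : w ∉ p.support)
    (hstep : ∀ a b : V, (HG G m).Adj a b → s(a, b) ≠ s(w, z1) → G.Reach m' a b) :
    G.Reach m' x y := by
  induction p with
  | nil => exact Relation.ReflTransGen.refl
  | @cons a b c h q ih =>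
    rw [SimpleGraph.Walk.support_cons, List.mem_cons] at havoid
    push_neg at havoid
    have hne : s(a, b) ≠ s(w, z1) := by
      intro hEq
      rcases Sym2.eq_iff.1 hEq with ⟨h1, -⟩ | ⟨-, h2⟩
      · exact havoid.1 h1.symm
      · exact havoid.2 (h2 ▸ q.start_mem_support)
    exact (hstep a b h hne).trans (ih havoid.2)

lemma dagger (hconn : G.Conn m)
    (hbr : ∀ e, 1 ≤ m e → ¬ G.Conn (Function.update m e (m e - 1)))
    (r w z1 z2 : V) (hne : z1 ≠ z2)
    (a1 : (HG G m).Adj w z1) (a2 : (HG G m).Adj w z2)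
    (d1 : (HG G m).dist r z1 ≤ (HG G m).dist r w)
    (d2 : (HG G m).dist r z2 ≤ (HG G m).dist r w) : False := by
  have hNe : Nonempty V := ⟨w⟩
  have Hc := HG_connected hconn (G := G) (m := m)
  obtain ⟨e1, he1, hends1⟩ := a1
  have hstep : ∀ a b : V, (HG G m).Adj a b → s(a, b) ≠ s(w, z1) →
      G.Reach (Function.update m e1 (m e1 - 1)) a b := by
    rintro a b ⟨e, he, hends⟩ hsab
    have hee1 : e ≠ e1 := fun h => hsab (by rw [← hends, h, hends1])
    exact Relation.ReflTransGen.single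
      ⟨e, by rw [Function.update_of_ne hee1]; omega, hends⟩
  have hwz1 : w ≠ z1 := fun h => (G.not_loop e1) (by
    rw [hends1, h]; exact Sym2.mk_isDiag_iff.2 rfl)
  have hwz2 : w ≠ z2 := by
    obtain ⟨e2, he2, hends2⟩ := a2
    intro h
    exact (G.not_loop e2) (by rw [hends2, h]; exact Sym2.mk_isDiag_iff.2 rfl)
  obtain ⟨p1, hp1len, hp1⟩ := shortest_avoid Hc d1 hwz1
  obtain ⟨p2, hp2len, hp2⟩ := shortest_avoid Hc d2 hwz2
  have R1 : G.Reach (Function.update m e1 (m e1 - 1)) r z1 := walk_reach_avoid p1 hp1 hstep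
  have R2 : G.Reach (Function.update m e1 (m e1 - 1)) r w := by
    have Rz2 : G.Reach (Function.update m e1 (m e1 - 1)) r z2 := walk_reach_avoid p2 hp2 hstep
    obtain ⟨e2, he2, hends2⟩ := a2
    have hee : e2 ≠ e1 := by
      intro h
      rw [h, hends1] at hends2
      rcases Sym2.eq_iff.1 hends2 with ⟨-, h'⟩ | ⟨h', -⟩
      · exact hne h'
      · exact hwz2 h'
    exact Rz2.trans (Relation.ReflTransGen.single
      ⟨e2, by rw [Function.update_of_ne hee]; omega, hends2.trans Sym2.eq_swap⟩)
  have hstepAll : ∀ a b : V, (∃ e, 1 ≤ m e ∧ G.ends e = s(a, b)) →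
      G.Reach (Function.update m e1 (m e1 - 1)) a b := by
    rintro a b he
    by_cases hsab : s(a, b) = s(w, z1)
    · rcases Sym2.eq_iff.1 hsab with ⟨rfl, rfl⟩ | ⟨rfl, rfl⟩
      · exact (reach_symm R2).trans R1
      · exact (reach_symm R1).trans R2
    · exact hstep a b he hsab
  exact hbr e1 he1 (conn_of_step_imp hstepAll hconn)

lemma parentEx (Hc : (HG G m).Connected) {r v : V} (hv : v ≠ r) :
    ∃ p e, 1 ≤ m e ∧ G.ends e = s(v, p) ∧ (HG G m).dist r p < (HG G m).dist r v := by
  obtain ⟨q, hq⟩ := (Hc.preconnected r v).exists_walk_length_eq_dist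
  obtain ⟨z, hadj, q', hq'⟩ := SimpleGraph.Walk.exists_eq_cons_of_ne hv q.reverse
  have hlen : q'.length + 1 = (HG G m).dist r v := by
    have := congrArg SimpleGraph.Walk.length hq'
    rw [SimpleGraph.Walk.length_reverse, SimpleGraph.Walk.length_cons] at this
    omega
  have hdz : (HG G m).dist r z ≤ q'.length := by
    have := SimpleGraph.dist_le q'.reverse
    rwa [SimpleGraph.Walk.length_reverse] at this
  obtain ⟨e, he, hends⟩ := hadj
  exact ⟨z, e, he, hends, by omega⟩

lemma childEx (hconn : G.Conn m)
    (hbr : ∀ e, 1 ≤ m e → ¬ G.Conn (Function.update m e (m e - 1)))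
    {r u : V} (hu2 : 2 ≤ G.deg m u) :
    ∃ c e, 1 ≤ m e ∧ G.ends e = s(u, c) ∧ (HG G m).dist r u < (HG G m).dist r c := by
  have hcard : 2 ≤ (Finset.univ.filter fun e => u ∈ G.ends e ∧ 1 ≤ m e).card := by
    have h1 : G.deg m u ≤ ∑ e, if u ∈ G.ends e ∧ 1 ≤ m e then 1 else 0 := by
      refine Finset.sum_le_sum fun e _ => ?_
      have hle := bridge_le_one hconn hbr e
      by_cases h : u ∈ G.ends e <;> by_cases h2 : 1 ≤ m e <;> simp [h, h2] <;> omega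
    have h2 : (∑ e, if u ∈ G.ends e ∧ 1 ≤ m e then 1 else 0)
        = (Finset.univ.filter fun e => u ∈ G.ends e ∧ 1 ≤ m e).card := by
      rw [Finset.card_eq_sum_ones, Finset.sum_filter]
    omega
  obtain ⟨e1, hm1, e2, hm2, hne⟩ := Finset.one_lt_card.1 hcard
  rw [Finset.mem_filter] at hm1 hm2
  obtain ⟨z1, hz1⟩ := Sym2.mem_iff_exists.1 hm1.2.1
  obtain ⟨z2, hz2⟩ := Sym2.mem_iff_exists.1 hm2.2.1
  have hzz : z1 ≠ z2 := by
    rintro rfl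
    exact bridge_no_par hconn hbr hne hm1.2.2 hm2.2.2 (hz1.trans hz2.symm)
  have a1 : (HG G m).Adj u z1 := ⟨e1, hm1.2.2, hz1⟩
  have a2 : (HG G m).Adj u z2 := ⟨e2, hm2.2.2, hz2⟩
  rcases lt_or_ge ((HG G m).dist r u) ((HG G m).dist r z1) with h | h
  · exact ⟨z1, e1, hm1.2.2, hz1, h⟩
  · rcases lt_or_ge ((HG G m).dist r u) ((HG G m).dist r z2) with h' | h'
    · exact ⟨z2, e2, hm2.2.2, hz2, h'⟩
    · exact absurd (dagger hconn hbr r u z1 z2 hzz a1 a2 h h') (fun hF => hF)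

lemma conn_card_le_size (hconn : G.Conn m) : Fintype.card V ≤ size m + 1 := by
  by_cases hV : Fintype.card V ≤ 1
  · omega
  · push_neg at hV
    have hNe : Nonempty V := Fintype.card_pos_iff.1 (by omega)
    obtain ⟨r⟩ := id hNe
    have Hc : (HG G m).Connected := HG_connected hconn
    have key : ∀ v : V, v ≠ r → ∃ e, 1 ≤ m e ∧ ∃ p, G.ends e = s(v, p) ∧
        (HG G m).dist r p < (HG G m).dist r v := by
      intro v hv
      obtain ⟨p, e, he, hends, hd⟩ := parentEx Hc hv
      exact ⟨e, he, p, hends, hd⟩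
    choose φ hφ1 hφ2 using key
    obtain ⟨v0, hv0⟩ : ∃ v : V, v ≠ r := by
      by_contra hall
      push_neg at hall
      have : Fintype.card V ≤ 1 := Fintype.card_le_one_iff.2 fun a b => (hall a).trans (hall b).symm
      omega
    set F : V → E := fun v => if h : v ≠ r then φ v h else φ v0 hv0 with hF
    have hmaps : ∀ v ∈ Finset.univ.erase r, F v ∈ Finset.univ.filter fun e => 1 ≤ m e := by
      intro v hv
      have hvr : v ≠ r := Finset.ne_of_mem_erase hv
      simp only [hF, dif_pos hvr, Finset.mem_filter, Finset.mem_univ, true_and]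
      exact hφ1 v hvr
    have hinj : Set.InjOn F (Finset.univ.erase r) := by
      intro v1 h1 v2 h2 heq
      have hv1 : v1 ≠ r := Finset.ne_of_mem_erase (Finset.mem_coe.1 h1)
      have hv2 : v2 ≠ r := Finset.ne_of_mem_erase (Finset.mem_coe.1 h2)
      rw [hF] at heq
      simp only [dif_pos hv1, dif_pos hv2] at heq
      obtain ⟨p1, hends1, hd1⟩ := hφ2 v1 hv1
      obtain ⟨p2, hends2, hd2⟩ := hφ2 v2 hv2
      have hss : s(v1, p1) = s(v2, p2) := by rw [← hends1, heq, hends2]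
      rcases Sym2.eq_iff.1 hss with ⟨h, -⟩ | ⟨ha, hb⟩
      · exact h
      · subst ha; subst hb; omega
    have hcard := Finset.card_le_card_of_injOn F hmaps hinj
    have h1 : (Finset.univ.erase r).card = Fintype.card V - 1 := by
      rw [Finset.card_erase_of_mem (Finset.mem_univ r), Finset.card_univ]
    have h2 : (Finset.univ.filter fun e => 1 ≤ m e).card ≤ size m := by
      rw [Finset.card_eq_sum_ones]
      calc (∑ _e ∈ (Finset.univ.filter fun e => 1 ≤ m e), 1)
          ≤ ∑ e ∈ (Finset.univ.filter fun e => 1 ≤ m e), m e :=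
            Finset.sum_le_sum fun e he => (Finset.mem_filter.1 he).2
        _ ≤ ∑ e, m e := Finset.sum_le_sum_of_subset (Finset.filter_subset _ _)
    omega

lemma pathinn3 {u p c : V} {ep ec : E} (hpu : p ≠ u) (hpc : p ≠ c) (huc : u ≠ c)
    (hee : ep ≠ ec) (h1 : G.ends ep = s(p, u)) (h2 : G.ends ec = s(u, c)) :
    G.IsPathInn {u} ([p, u, c], [ep, ec]) := by
  refine ⟨rfl, by simp [hpu, hpc, huc], by simp [hee], ?_, ?_⟩
  · intro i h
    match i, h with
    | 0, _ => exact ⟨p, u, rfl, rfl, h1⟩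
    | 1, _ => exact ⟨u, c, rfl, rfl, h2⟩
  · simp [innFinset, innList]

lemma pathinn4 {x u v y : V} {e1 e2 e3 : E}
    (h12 : x ≠ u) (h13 : x ≠ v) (h14 : x ≠ y) (h23 : u ≠ v) (h24 : u ≠ y) (h34 : v ≠ y)
    (he12 : e1 ≠ e2) (he13 : e1 ≠ e3) (he23 : e2 ≠ e3)
    (g1 : G.ends e1 = s(x, u)) (g2 : G.ends e2 = s(u, v)) (g3 : G.ends e3 = s(v, y)) :
    G.IsPathInn {u, v} ([x, u, v, y], [e1, e2, e3]) := by
  refine ⟨rfl, by simp [h12, h13, h14, h23, h24, h34], by simp [he12, he13, he23], ?_, ?_⟩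
  · intro i h
    match i, h with
    | 0, _ => exact ⟨x, u, rfl, rfl, g1⟩
    | 1, _ => exact ⟨u, v, rfl, rfl, g2⟩
    | 2, _ => exact ⟨v, y, rfl, rfl, g3⟩
  · simp [innFinset, innList]

/-- The invariant satisfied by the canonically chosen earmuff paths. -/
def Good (d : V → ℕ) (f : Finset V) (Q : Ear V E) : Prop :=
  G.IsPathInn f Q ∧
  ((∃ u p c ep ec, f = {u} ∧ Q = ([p, u, c], [ep, ec]) ∧ G.ends ep = s(p, u) ∧
      G.ends ec = s(u, c) ∧ 1 ≤ m ep ∧ 1 ≤ m ec ∧ d p < d u ∧ d u < d c ∧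
      p ∉ VM M ∧ c ∉ VM M) ∨
   (∃ u v c p e1 e2 e3, f = {u, v} ∧ Q = ([c, u, v, p], [e1, e2, e3]) ∧
      G.ends e1 = s(c, u) ∧ G.ends e2 = s(u, v) ∧ G.ends e3 = s(v, p) ∧
      1 ≤ m e1 ∧ 1 ≤ m e2 ∧ 1 ≤ m e3 ∧
      d p < d v ∧ d v < d u ∧ d u < d c ∧ c ∉ VM M ∧ p ∉ VM M) ∨
   (∃ u v cu cv e1 e2 e3, f = {u, v} ∧ Q = ([cu, u, v, cv], [e1, e2, e3]) ∧
      G.ends e1 = s(cu, u) ∧ G.ends e2 = s(u, v) ∧ G.ends e3 = s(v, cv) ∧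
      1 ≤ m e1 ∧ 1 ≤ m e3 ∧ (¬ ∃ e', 1 ≤ m e' ∧ G.ends e' = s(u, v)) ∧
      d u < d cu ∧ d v < d cv ∧ cu ∉ VM M ∧ cv ∉ VM M))

lemma exists_root (hM : G.IsEardrum M) {f : Finset V} (hf : f ∈ M)
    {P : Ear V E} (hPi : G.IsPathInn f P) : ∃ x, x ∉ VM M := by
  obtain ⟨hlen, hnd1, hnd2, hidx, hinn⟩ := hPi
  have hfne : f.Nonempty := by
    rcases hM.2.1 f hf with h | h
    · exact Finset.card_pos.1 (by omega)
    · exact Finset.card_pos.1 (by omega)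
  obtain ⟨y, hy⟩ := hfne
  have hyl : y ∈ innList P := by
    rw [← hinn] at hy
    exact List.mem_toFinset.1 hy
  have h3 : 3 ≤ P.1.length := by
    have h0 : innList P ≠ [] := fun h => by simp [h] at hyl
    have hpos : 0 < (innList P).length := List.length_pos_iff.2 h0
    unfold innList at hpos
    rw [List.length_dropLast, List.length_drop] at hpos
    omega
  -- expose the first three vertices
  obtain ⟨x, l1, hx⟩ : ∃ x l1, P.1 = x :: l1 := by
    cases hl : P.1 with
    | nil => rw [hl] at h3; simp at h3
    | cons x l1 => exact ⟨x, l1, rfl⟩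
  obtain ⟨u, l2, hu⟩ : ∃ u l2, l1 = u :: l2 := by
    cases hl : l1 with
    | nil => rw [hl] at hx; rw [hx] at h3; simp at h3
    | cons u l2 => exact ⟨u, l2, rfl⟩
  obtain ⟨c, l3, hc⟩ : ∃ c l3, l2 = c :: l3 := by
    cases hl : l2 with
    | nil => rw [hl] at hu; rw [hu] at hx; rw [hx] at h3; simp at h3
    | cons c l3 => exact ⟨c, l3, rfl⟩
  have hP1 : P.1 = x :: u :: c :: l3 := by rw [hx, hu, hc]
  have huinn : u ∈ innList P := by
    unfold innList
    rw [hP1]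
    simp
  have hxinn : x ∉ innList P := by
    intro hmem
    unfold innList at hmem
    rw [hP1] at hmem
    have : x ∈ u :: c :: l3 := List.dropLast_subset _ (by simpa using hmem)
    rw [hP1] at hnd1
    exact (List.nodup_cons.1 hnd1).1 this
  have hxf : x ∉ f := by
    intro h
    rw [← hinn] at h
    exact hxinn (List.mem_toFinset.1 h)
  have huf : u ∈ f := by
    rw [← hinn]
    exact List.mem_toFinset.2 huinn
  refine ⟨x, fun hxVM => ?_⟩
  have h2 : 0 < P.2.length := by omega
  obtain ⟨a, b, ha, hb, hends⟩ := hidx 0 h2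
  have hax : a = x := by
    rw [hP1] at ha
    simp only [List.getElem?_cons_zero, Option.some.injEq] at ha
    exact ha.symm
  have hbu : b = u := by
    rw [hP1] at hb
    simp only [List.getElem?_cons_succ, List.getElem?_cons_zero, Option.some.injEq] at hb
    exact hb.symm
  subst hax
  subst hbu
  have hall : ∀ w ∈ G.ends (P.2.get ⟨0, h2⟩), w ∈ VM M := by
    intro w hw
    rw [hends] at hw
    rcases Sym2.mem_iff.1 hw with rfl | rfl
    · exact hxVM
    · exact mem_VM_of hf huf
  obtain ⟨g, hg, hsub⟩ := hM.2.2.2 _ hall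
  have hug : b ∈ g := hsub b (by rw [hends]; exact Sym2.mem_iff.2 (Or.inr rfl))
  have hfg : f = g := eq_of_mem_inter hM hf hg huf hug
  exact hxf (hfg ▸ hsub a (by rw [hends]; exact Sym2.mem_iff.2 (Or.inl rfl)))

lemma good_classify {d : V → ℕ} {f : Finset V} {Q : Ear V E}
    (g : Good (G := G) (m := m) (M := M) d f Q) {e : E} {w z : V} (he : e ∈ Q.2)
    (hw : G.ends e = s(w, z)) (hd : d z ≤ d w) :
    (1 ≤ m e ∧ (w ∈ f ∨ w ∉ VM M)) ∨
    (∃ u v cu cv E1 E3, f = {u, v} ∧ Q = ([cu, u, v, cv], [E1, e, E3]) ∧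
      G.ends E1 = s(cu, u) ∧ G.ends E3 = s(v, cv) ∧ 1 ≤ m E1 ∧ 1 ≤ m E3 ∧
      (¬ ∃ e', 1 ≤ m e' ∧ G.ends e' = s(u, v)) ∧ d u < d cu ∧ d v < d cv ∧
      cu ∉ VM M ∧ cv ∉ VM M ∧ w ∈ f ∧ z ∈ f ∧ G.ends e = s(u, v)) := by
  obtain ⟨-, hs⟩ := g
  rcases hs with ⟨u, p, c, ep, ec, hf, hQ, hep, hec, hm1, hm2, hd1, hd2, hpV, hcV⟩ |
    ⟨u, v, c, p, E1, E2, E3, hf, hQ, h1, h2, h3, hm1, hm2, hm3, hdp, hdv, hdu, hcV, hpV⟩ |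
    ⟨u, v, cu, cv, E1, E2, E3, hf, hQ, h1, h2, h3, hm1, hm3, hno, hdcu, hdcv, hcu, hcv⟩
  · have he' : e = ep ∨ e = ec := by
      rw [hQ] at he
      simpa using he
    rcases he' with rfl | rfl
    · rcases Sym2.eq_iff.1 (hep.symm.trans hw) with ⟨hh1, hh2⟩ | ⟨hh1, hh2⟩
      · rw [← hh1, ← hh2] at hd; omega
      · refine Or.inl ⟨hm1, Or.inl ?_⟩
        rw [hf, ← hh2]
        exact Finset.mem_singleton_self u
    · rcases Sym2.eq_iff.1 (hec.symm.trans hw) with ⟨hh1, hh2⟩ | ⟨hh1, hh2⟩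
      · rw [← hh1, ← hh2] at hd; omega
      · exact Or.inl ⟨hm2, Or.inr (hh2 ▸ hcV)⟩
  · have he' : e = E1 ∨ e = E2 ∨ e = E3 := by
      rw [hQ] at he
      simpa using he
    rcases he' with rfl | rfl | rfl
    · rcases Sym2.eq_iff.1 (h1.symm.trans hw) with ⟨hh1, hh2⟩ | ⟨hh1, hh2⟩
      · exact Or.inl ⟨hm1, Or.inr (hh1 ▸ hcV)⟩
      · rw [← hh1, ← hh2] at hd; omega
    · rcases Sym2.eq_iff.1 (h2.symm.trans hw) with ⟨hh1, hh2⟩ | ⟨hh1, hh2⟩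
      · refine Or.inl ⟨hm2, Or.inl ?_⟩
        rw [hf, ← hh1]
        exact Finset.mem_insert_self u {v}
      · rw [← hh1, ← hh2] at hd; omega
    · rcases Sym2.eq_iff.1 (h3.symm.trans hw) with ⟨hh1, hh2⟩ | ⟨hh1, hh2⟩
      · refine Or.inl ⟨hm3, Or.inl ?_⟩
        rw [hf, ← hh1]
        exact Finset.mem_insert_of_mem (Finset.mem_singleton_self v)
      · rw [← hh1, ← hh2] at hd; omega
  · have he' : e = E1 ∨ e = E2 ∨ e = E3 := by
      rw [hQ] at he
      simpa using he
    rcases he' with rfl | rfl | rfl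
    · rcases Sym2.eq_iff.1 (h1.symm.trans hw) with ⟨hh1, hh2⟩ | ⟨hh1, hh2⟩
      · exact Or.inl ⟨hm1, Or.inr (hh1 ▸ hcu)⟩
      · rw [← hh1, ← hh2] at hd; omega
    · refine Or.inr ⟨u, v, cu, cv, E1, E3, hf, hQ, h1, h3, hm1, hm3, hno, hdcu, hdcv,
        hcu, hcv, ?_, ?_, h2⟩
      · rcases Sym2.eq_iff.1 (h2.symm.trans hw) with ⟨hh1, -⟩ | ⟨-, hh2⟩
        · rw [hf, ← hh1]; exact Finset.mem_insert_self u {v}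
        · rw [hf, ← hh2]; exact Finset.mem_insert_of_mem (Finset.mem_singleton_self v)
      · rcases Sym2.eq_iff.1 (h2.symm.trans hw) with ⟨-, hh2⟩ | ⟨hh1, -⟩
        · rw [hf, ← hh2]; exact Finset.mem_insert_of_mem (Finset.mem_singleton_self v)
        · rw [hf, ← hh1]; exact Finset.mem_insert_self u {v}
    · rcases Sym2.eq_iff.1 (h3.symm.trans hw) with ⟨hh1, hh2⟩ | ⟨hh1, hh2⟩
      · rw [← hh1, ← hh2] at hd; omega
      · exact Or.inl ⟨hm3, Or.inr (hh2 ▸ hcv)⟩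

lemma good_pairwise (hM : G.IsEardrum M) {d : V → ℕ}
    (hdag : ∀ w z1 z2 : V, z1 ≠ z2 → (HG G m).Adj w z1 → (HG G m).Adj w z2 →
      d z1 ≤ d w → d z2 ≤ d w → False)
    (hnopar : ∀ e1 e2 : E, e1 ≠ e2 → 1 ≤ m e1 → 1 ≤ m e2 → G.ends e1 ≠ G.ends e2)
    {f1 f2 : Finset V} {Q1 Q2 : Ear V E}
    (h1 : f1 ∈ M) (h2 : f2 ∈ M)
    (g1 : Good (G := G) (m := m) (M := M) d f1 Q1)
    (g2 : Good (G := G) (m := m) (M := M) d f2 Q2)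
    (hQeq : f1 = f2 → Q1 = Q2)
    {e1 e2 : E} {w z1 z2 : V} (he1 : e1 ∈ Q1.2) (he2 : e2 ∈ Q2.2) (hne : e1 ≠ e2)
    (hw1 : G.ends e1 = s(w, z1)) (hw2 : G.ends e2 = s(w, z2))
    (hd1 : d z1 ≤ d w) (hd2 : d z2 ≤ d w) : False := by
  have mixed : ∀ {f1' f2' : Finset V} {Q1' Q2' : Ear V E} {e1' e2' : E} {z1' z2' : V},
      f1' ∈ M → f2' ∈ M →
      Good (G := G) (m := m) (M := M) d f1' Q1' →
      (f1' = f2' → Q1' = Q2') →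
      e1' ∈ Q1'.2 → e1' ≠ e2' →
      G.ends e1' = s(w, z1') → d z1' ≤ d w →
      (1 ≤ m e1' ∧ (w ∈ f1' ∨ w ∉ VM M)) →
      (∃ u v cu cv E1 E3, f2' = {u, v} ∧ Q2' = ([cu, u, v, cv], [E1, e2', E3]) ∧
        G.ends E1 = s(cu, u) ∧ G.ends E3 = s(v, cv) ∧ 1 ≤ m E1 ∧ 1 ≤ m E3 ∧
        (¬ ∃ e', 1 ≤ m e' ∧ G.ends e' = s(u, v)) ∧ d u < d cu ∧ d v < d cv ∧
        cu ∉ VM M ∧ cv ∉ VM M ∧ w ∈ f2' ∧ z2' ∈ f2' ∧ G.ends e2' = s(u, v)) → False := by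
    rintro f1' f2' Q1' Q2' e1' e2' z1' z2' hf1 hf2 gg1 hQQ hee1 hnee hww1 hdd1
      ⟨hm1, hloc⟩ ⟨u, v, cu, cv, E1, E3, hf2eq, hQ2eq, hE1, hE3, hmE1, hmE3,
        hno, hdu, hdv, hcu, hcv, hwf2, hzf2, hends2⟩
    have hwVM : w ∈ VM M := mem_VM_of hf2 hwf2
    have hwf1 : w ∈ f1' := by
      rcases hloc with h | h
      · exact h
      · exact absurd hwVM h
    have hff : f1' = f2' := eq_of_mem_inter hM hf1 hf2 hwf1 hwf2
    have hQ12 : Q1' = Q2' := hQQ hff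
    rw [hQ12, hQ2eq] at hee1
    have he1cases : e1' = E1 ∨ e1' = e2' ∨ e1' = E3 := by simpa using hee1
    rcases he1cases with rfl | h | rfl
    · rcases Sym2.eq_iff.1 (hE1.symm.trans hww1) with ⟨hh1, hh2⟩ | ⟨hh1, hh2⟩
      · exact hcu (hh1 ▸ hwVM)
      · rw [← hh2] at hdd1
        rw [← hh1] at hdd1
        omega
    · exact hnee h
    · rcases Sym2.eq_iff.1 (hE3.symm.trans hww1) with ⟨hh1, hh2⟩ | ⟨hh1, hh2⟩
      · rw [← hh1] at hdd1
        rw [← hh2] at hdd1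
        omega
      · exact hcv (hh2 ▸ hwVM)
  rcases good_classify g1 he1 hw1 hd1 with K11 | K12
  · rcases good_classify g2 he2 hw2 hd2 with K21 | K22
    · -- both ordinary edges
      by_cases hz : z1 = z2
      · subst hz
        exact hnopar e1 e2 hne K11.1 K21.1 (hw1.trans hw2.symm)
      · exact hdag w z1 z2 hz ⟨e1, K11.1, hw1⟩ ⟨e2, K21.1, hw2⟩ hd1 hd2
    · exact mixed h1 h2 g1 hQeq he1 hne hw1 hd1 K11 K22
  · rcases good_classify g2 he2 hw2 hd2 with K21 | K22
    · exact mixed h2 h1 g2 (fun h => (hQeq h.symm).symm) he2 (Ne.symm hne) hw2 hd2 K21 K12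
    · -- both chords
      obtain ⟨u, v, cu, cv, E1, E3, hf1eq, hQ1eq, -, -, -, -, -, -, -, -, -, hwf1, -, -⟩ := K12
      obtain ⟨u', v', cu', cv', E1', E3', hf2eq, hQ2eq, -, -, -, -, -, -, -, -, -, hwf2, -, -⟩ := K22
      have hff : f1 = f2 := eq_of_mem_inter hM h1 h2 hwf1 hwf2
      have hQ12 := hQeq hff
      rw [hQ1eq, hQ2eq] at hQ12
      have hl : ([E1, e1, E3] : List E) = [E1', e2, E3'] := congrArg Prod.snd hQ12
      simp only [List.cons.injEq] at hl
      exact hne hl.2.1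

lemma good_forest (hM : G.IsEardrum M) {d : V → ℕ}
    (hdag : ∀ w z1 z2 : V, z1 ≠ z2 → (HG G m).Adj w z1 → (HG G m).Adj w z2 →
      d z1 ≤ d w → d z2 ≤ d w → False)
    (hnopar : ∀ e1 e2 : E, e1 ≠ e2 → 1 ≤ m e1 → 1 ≤ m e2 → G.ends e1 ≠ G.ends e2)
    {Pf : Finset V → Ear V E}
    (hgood : ∀ f ∈ M, Good (G := G) (m := m) (M := M) d f (Pf f)) :
    G.IsForest (M.biUnion fun f => (Pf f).2.toFinset) := by
  intro B hB hBne
  have hBA : ∀ e ∈ B, ∃ f ∈ M, e ∈ (Pf f).2 := by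
    intro e he
    obtain ⟨f, hf, hef⟩ := Finset.mem_biUnion.1 (hB he)
    exact ⟨f, hf, List.mem_toFinset.1 hef⟩
  obtain ⟨e0, he0⟩ := hBne
  have hWne : (Finset.univ.filter fun v => ∃ e ∈ B, v ∈ G.ends e).Nonempty := by
    refine ⟨(G.ends e0).out.1, ?_⟩
    simp only [Finset.mem_filter, Finset.mem_univ, true_and]
    exact ⟨e0, he0, Sym2.out_fst_mem _⟩
  obtain ⟨w, hwW, hwmax⟩ := Finset.exists_max_image _ d hWne
  obtain ⟨ew, hewB, hwew⟩ := (Finset.mem_filter.1 hwW).2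
  refine ⟨w, ?_⟩
  rw [Finset.card_eq_one]
  refine ⟨ew, ?_⟩
  ext e
  simp only [Finset.mem_filter, Finset.mem_singleton]
  constructor
  · rintro ⟨heB, hwe⟩
    by_contra hne
    obtain ⟨z, hz⟩ := Sym2.mem_iff_exists.1 hwe
    obtain ⟨zw, hzw⟩ := Sym2.mem_iff_exists.1 hwew
    obtain ⟨f1, hf1, hef1⟩ := hBA e heB
    obtain ⟨f2, hf2, hef2⟩ := hBA ew hewB
    have hzW : z ∈ Finset.univ.filter fun v => ∃ e ∈ B, v ∈ G.ends e := by
      simp only [Finset.mem_filter, Finset.mem_univ, true_and]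
      exact ⟨e, heB, by rw [hz]; exact Sym2.mem_iff.2 (Or.inr rfl)⟩
    have hzwW : zw ∈ Finset.univ.filter fun v => ∃ e ∈ B, v ∈ G.ends e := by
      simp only [Finset.mem_filter, Finset.mem_univ, true_and]
      exact ⟨ew, hewB, by rw [hzw]; exact Sym2.mem_iff.2 (Or.inr rfl)⟩
    exact good_pairwise hM hdag hnopar hf1 hf2 (hgood f1 hf1) (hgood f2 hf2)
      (fun h => by rw [h]) hef1 hef2 hne hz hzw (hwmax z hzW) (hwmax zw hzwW)
  · rintro rfl
    exact ⟨hewB, hwew⟩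

lemma good_exists (hM : G.IsEardrum M) {d : V → ℕ}
    (hdag : ∀ w z1 z2 : V, z1 ≠ z2 → (HG G m).Adj w z1 → (HG G m).Adj w z2 →
      d z1 ≤ d w → d z2 ≤ d w → False)
    (hpar : ∀ v ∈ VM M, ∃ p e, 1 ≤ m e ∧ G.ends e = s(v, p) ∧ d p < d v)
    (hchild : ∀ u ∈ VM M, ∃ c e, 1 ≤ m e ∧ G.ends e = s(u, c) ∧ d u < d c)
    {f : Finset V} (hf : f ∈ M) : ∃ Q, Good (G := G) (m := m) (M := M) d f Q := by
  rcases hM.2.1 f hf with hc1 | hc2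
  · -- singleton
    obtain ⟨u, rfl⟩ := Finset.card_eq_one.1 hc1
    have hu : u ∈ VM M := mem_VM_of hf (Finset.mem_singleton_self u)
    obtain ⟨p, ep, hmp, hep, hdp⟩ := hpar u hu
    obtain ⟨c, ec, hmc, hec, hdc⟩ := hchild u hu
    have hpu : p ≠ u := fun h => by rw [h] at hdp; omega
    have huc : u ≠ c := fun h => by rw [h] at hdc; omega
    have hpc : p ≠ c := fun h => by rw [h] at hdp; omega
    have hpVM : p ∉ VM M :=
      not_mem_VM_side hM hf (Finset.mem_singleton_self u) hep
        (Finset.notMem_singleton.2 hpu)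
    have hcVM : c ∉ VM M :=
      not_mem_VM_side hM hf (Finset.mem_singleton_self u) hec
        (Finset.notMem_singleton.2 (Ne.symm huc))
    have hee : ep ≠ ec := by
      intro h
      rw [h] at hep
      rcases Sym2.eq_iff.1 (hep.symm.trans hec) with ⟨-, hh2⟩ | ⟨-, hh2⟩
      · exact hpc hh2
      · exact hpu hh2
    exact ⟨([p, u, c], [ep, ec]),
      pathinn3 hpu hpc huc hee (hep.trans Sym2.eq_swap) hec,
      Or.inl ⟨u, p, c, ep, ec, rfl, rfl, hep.trans Sym2.eq_swap, hec, hmp, hmc,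
        hdp, hdc, hpVM, hcVM⟩⟩
  · -- pair
    obtain ⟨u, v, huv, rfl⟩ := Finset.card_eq_two.1 hc2
    have hu : u ∈ VM M := mem_VM_of hf (Finset.mem_insert_self u {v})
    have hv : v ∈ VM M := mem_VM_of hf (Finset.mem_insert_of_mem (Finset.mem_singleton_self v))
    by_cases hch : ∃ e, 1 ≤ m e ∧ G.ends e = s(u, v)
    · -- the two vertices of f are joined by an edge of the subgraph
      have buildT : ∀ a b : V, ({a, b} : Finset V) = {u, v} →
          (∃ e, 1 ≤ m e ∧ G.ends e = s(a, b)) → d b < d a →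
          ∃ Q, Good (G := G) (m := m) (M := M) d ({u, v} : Finset V) Q := by
        intro a b hab hch' hba
        have haf : a ∈ ({u, v} : Finset V) := by rw [← hab]; exact Finset.mem_insert_self a {b}
        have hbf : b ∈ ({u, v} : Finset V) := by
          rw [← hab]; exact Finset.mem_insert_of_mem (Finset.mem_singleton_self b)
        have hbVM : b ∈ VM M := mem_VM_of hf hbf
        have haVM : a ∈ VM M := mem_VM_of hf haf
        obtain ⟨c, ec, hmc, hec, hdc⟩ := hchild a haVM
        obtain ⟨p, ep, hmp, hep, hdp⟩ := hpar b hbVM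
        obtain ⟨e2, hme2, hende2⟩ := hch'
        have hab' : a ≠ b := fun h => by rw [h] at hba; omega
        have hca : c ≠ a := fun h => by rw [h] at hdc; omega
        have hcb : c ≠ b := fun h => by rw [h] at hdc; omega
        have hcp : c ≠ p := fun h => by rw [h] at hdc; omega
        have hap : a ≠ p := fun h => by rw [h] at hba; omega
        have hbp : b ≠ p := fun h => by rw [h] at hdp; omega
        have hcf : c ∉ ({u, v} : Finset V) := by
          rw [← hab]
          simp only [Finset.mem_insert, Finset.mem_singleton]
          push_neg
          exact ⟨hca, hcb⟩
        have hpf : p ∉ ({u, v} : Finset V) := by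
          rw [← hab]
          simp only [Finset.mem_insert, Finset.mem_singleton]
          push_neg
          exact ⟨fun h => hap h.symm, fun h => hbp h.symm⟩
        have hcVM : c ∉ VM M := not_mem_VM_side hM hf haf hec hcf
        have hpVM : p ∉ VM M := not_mem_VM_side hM hf hbf hep hpf
        have hece2 : ec ≠ e2 := by
          intro h
          rw [h] at hec
          rcases Sym2.eq_iff.1 (hec.symm.trans hende2) with ⟨-, hh2⟩ | ⟨hh1, -⟩
          · exact hcb hh2
          · exact hab' hh1
        have hecep : ec ≠ ep := by
          intro h
          rw [h] at hec
          rcases Sym2.eq_iff.1 (hec.symm.trans hep) with ⟨hh1, -⟩ | ⟨hh1, -⟩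
          · exact hab' hh1
          · exact hap hh1
        have he2ep : e2 ≠ ep := by
          intro h
          rw [h] at hende2
          rcases Sym2.eq_iff.1 (hende2.symm.trans hep) with ⟨hh1, -⟩ | ⟨hh1, -⟩
          · exact hab' hh1
          · exact hap hh1
        refine ⟨([c, a, b, p], [ec, e2, ep]), ?_, ?_⟩
        · have hpi := pathinn4 (G := G) hca hcb hcp hab' hap hbp hece2 hecep he2ep
            (hec.trans Sym2.eq_swap) hende2 hep
          rw [hab] at hpi
          exact hpi
        · exact Or.inr (Or.inl ⟨a, b, c, p, ec, e2, ep, hab.symm, rfl,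
            hec.trans Sym2.eq_swap, hende2, hep, hmc, hme2, hmp, hdp, hba, hdc, hcVM, hpVM⟩)
      have hdne : d u ≠ d v := by
        intro heq
        obtain ⟨pu, epu, hmpu, hendpu, hdpu⟩ := hpar u hu
        have hvpu : v ≠ pu := fun h => by rw [← h] at hdpu; omega
        obtain ⟨ee, hee1, hee2⟩ := hch
        exact hdag u v pu hvpu ⟨ee, hee1, hee2⟩ ⟨epu, hmpu, hendpu⟩ (by omega) (by omega)
      rcases lt_or_gt_of_ne hdne with h | h
      · obtain ⟨ee, hee1, hee2⟩ := hch
        exact buildT v u (Finset.pair_comm v u) ⟨ee, hee1, hee2.trans Sym2.eq_swap⟩ h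
      · exact buildT u v rfl hch h
    · -- no subgraph edge between u and v
      obtain ⟨cu, ecu, hmcu, hecu, hdcu⟩ := hchild u hu
      obtain ⟨cv, ecv, hmcv, hecv, hdcv⟩ := hchild v hv
      obtain ⟨e2, hende2⟩ := hM.2.2.1 _ hf u (Finset.mem_insert_self u {v}) v
        (Finset.mem_insert_of_mem (Finset.mem_singleton_self v)) huv
      have hcuu : cu ≠ u := fun h => by rw [h] at hdcu; omega
      have hcvv : cv ≠ v := fun h => by rw [h] at hdcv; omega
      have hcuv : cu ≠ v := by
        intro h
        exact hch ⟨ecu, hmcu, by rw [hecu, h]⟩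
      have hcvu : cv ≠ u := by
        intro h
        refine hch ⟨ecv, hmcv, ?_⟩
        rw [hecv, h]
        exact Sym2.eq_swap
      have hcucv : cu ≠ cv := by
        intro h
        subst h
        exact hdag cu u v huv ⟨ecu, hmcu, hecu.trans Sym2.eq_swap⟩
          ⟨ecv, hmcv, hecv.trans Sym2.eq_swap⟩ (le_of_lt hdcu) (le_of_lt hdcv)
      have hcuVM : cu ∉ VM M := by
        refine not_mem_VM_side hM hf (Finset.mem_insert_self u {v}) hecu ?_
        simp only [Finset.mem_insert, Finset.mem_singleton]
        push_neg
        exact ⟨hcuu, hcuv⟩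
      have hcvVM : cv ∉ VM M := by
        refine not_mem_VM_side hM hf (Finset.mem_insert_of_mem (Finset.mem_singleton_self v))
          hecv ?_
        simp only [Finset.mem_insert, Finset.mem_singleton]
        push_neg
        exact ⟨hcvu, hcvv⟩
      have he12 : ecu ≠ e2 := by
        intro h
        exact hch ⟨ecu, hmcu, h ▸ hende2⟩
      have he23 : e2 ≠ ecv := by
        intro h
        exact hch ⟨ecv, hmcv, (h ▸ hende2 : G.ends ecv = s(u, v))⟩
      have he13 : ecu ≠ ecv := by
        intro h
        rw [h] at hecu
        rcases Sym2.eq_iff.1 (hecu.symm.trans hecv) with ⟨hh1, -⟩ | ⟨-, hh2⟩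
        · exact huv hh1
        · exact hcuv hh2
      refine ⟨([cu, u, v, cv], [ecu, e2, ecv]), ?_, ?_⟩
      · exact pathinn4 hcuu hcuv hcucv huv (fun h => hcvu h.symm) (fun h => hcvv h.symm)
          he12 he13 he23 (hecu.trans Sym2.eq_swap) hende2 hecv
      · exact Or.inr (Or.inr ⟨u, v, cu, cv, ecu, e2, ecv, rfl, rfl,
          hecu.trans Sym2.eq_swap, hende2, hecv, hmcu, hmcv, hch, hdcu, hdcv, hcuVM, hcvVM⟩)

lemma tree_case (hconn : G.Conn m)
    (hbr : ∀ e, 1 ≤ m e → ¬ G.Conn (Function.update m e (m e - 1)))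
    (hM : G.IsEardrum M) (hP : ∀ f ∈ M, ∃ P : Ear V E, G.IsPathInn f P)
    (hdeg : ∀ v ∈ VM M, 2 ≤ G.deg m v) :
    Fintype.card V + M.card ≤ size m + G.mu M + 1 := by
  have hsz := conn_card_le_size hconn
  rcases Finset.eq_empty_or_nonempty M with rfl | hMne
  · simp only [Finset.card_empty]
    omega
  · obtain ⟨f0, hf0⟩ := hMne
    obtain ⟨P0, hP0⟩ := hP f0 hf0
    obtain ⟨r, hr⟩ := exists_root hM hf0 hP0
    have hNe : Nonempty V := ⟨r⟩
    have Hc : (HG G m).Connected := HG_connected hconn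
    have hdag : ∀ w z1 z2 : V, z1 ≠ z2 → (HG G m).Adj w z1 → (HG G m).Adj w z2 →
        (HG G m).dist r z1 ≤ (HG G m).dist r w →
        (HG G m).dist r z2 ≤ (HG G m).dist r w → False :=
      fun w z1 z2 hne a1 a2 b1 b2 => dagger hconn hbr r w z1 z2 hne a1 a2 b1 b2
    have hnopar : ∀ e1 e2 : E, e1 ≠ e2 → 1 ≤ m e1 → 1 ≤ m e2 → G.ends e1 ≠ G.ends e2 :=
      fun e1 e2 hne hm1 hm2 => bridge_no_par hconn hbr hne hm1 hm2
    have hpar : ∀ v ∈ VM M, ∃ p e, 1 ≤ m e ∧ G.ends e = s(v, p) ∧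
        (HG G m).dist r p < (HG G m).dist r v := by
      intro v hv
      exact parentEx Hc (fun h : v = r => hr (h ▸ hv))
    have hchild : ∀ u ∈ VM M, ∃ c e, 1 ≤ m e ∧ G.ends e = s(u, c) ∧
        (HG G m).dist r u < (HG G m).dist r c :=
      fun u hu => childEx hconn hbr (hdeg u hu)
    have hex : ∀ f ∈ M, ∃ Q, Good (G := G) (m := m) (M := M) ((HG G m).dist r) f Q :=
      fun f hf => good_exists hM hdag hpar hchild hf
    choose! Pf hPf using hex
    have hmuff : G.IsEarmuff M M Pf :=
      ⟨Finset.Subset.refl M, fun f hf => (hPf f hf).1, good_forest hM hdag hnopar hPf⟩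
    have hle := card_le_mu hmuff
    omega

lemma main_ind (G : MGraph V E) : ∀ (N : ℕ) (m : E → ℕ) (M : Finset (Finset V)),
    size m ≤ N → G.Conn m → G.IsEardrum M →
    (∀ f ∈ M, ∃ P : Ear V E, G.IsPathInn f P) →
    (∀ v ∈ VM M, 2 ≤ G.deg m v) →
    Fintype.card V + M.card ≤ size m + G.mu M + 1 := by
  intro N
  induction N with
  | zero =>
    intro m M hsz hconn hM hP hdeg
    refine tree_case hconn (fun e he => ?_) hM hP hdeg
    exfalso
    have h1 : m e ≤ size m :=
      Finset.single_le_sum (f := m) (fun i _ => Nat.zero_le _) (Finset.mem_univ e)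
    omega
  | succ N ih =>
    intro m M hsz hconn hM hP hdeg
    by_cases hcyc : ∃ e, 1 ≤ m e ∧ G.Conn (Function.update m e (m e - 1))
    · obtain ⟨e, he, hconn'⟩ := hcyc
      have hsz' : size (Function.update m e (m e - 1)) + 1 = size m := size_update_succ he
      obtain ⟨a, ha⟩ : ∃ a, a ∈ G.ends e := ⟨(G.ends e).out.1, Sym2.out_fst_mem _⟩
      obtain ⟨b, hab⟩ := Sym2.mem_iff_exists.1 ha
      have hM'sub : M.filter (fun f => ∀ v ∈ f, 2 ≤ G.deg (Function.update m e (m e - 1)) v)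
          ⊆ M := Finset.filter_subset _ _
      have hdeg' : ∀ v ∈ VM (M.filter fun f => ∀ v ∈ f,
          2 ≤ G.deg (Function.update m e (m e - 1)) v),
          2 ≤ G.deg (Function.update m e (m e - 1)) v := by
        intro v hv
        obtain ⟨f, hf, hvf⟩ := mem_VM_iff.1 hv
        exact (Finset.mem_filter.1 hf).2 v hvf
      have hcard : M.card ≤ (M.filter fun f => ∀ v ∈ f,
          2 ≤ G.deg (Function.update m e (m e - 1)) v).card + 1 := by
        have hsplit := Finset.card_filter_add_card_filter_not (s := M)
          (p := fun f => ∀ v ∈ f, 2 ≤ G.deg (Function.update m e (m e - 1)) v)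
        have hle1 : (M.filter fun f =>
            ¬ ∀ v ∈ f, 2 ≤ G.deg (Function.update m e (m e - 1)) v).card ≤ 1 := by
          rw [Finset.card_le_one]
          intro f1 hf1 f2 hf2
          rw [Finset.mem_filter] at hf1 hf2
          obtain ⟨hf1M, hd1⟩ := hf1
          obtain ⟨hf2M, hd2⟩ := hf2
          push_neg at hd1 hd2
          obtain ⟨v1, hv1f, hv1d⟩ := hd1
          obtain ⟨v2, hv2f, hv2d⟩ := hd2
          have hv1e : v1 ∈ G.ends e := by
            by_contra h
            rw [deg_update_of_not_mem h] at hv1d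
            exact absurd (hdeg v1 (mem_VM_of hf1M hv1f)) (by omega)
          have hv2e : v2 ∈ G.ends e := by
            by_contra h
            rw [deg_update_of_not_mem h] at hv2d
            exact absurd (hdeg v2 (mem_VM_of hf2M hv2f)) (by omega)
          by_contra hne
          have hv12 : v1 ≠ v2 := fun h =>
            (Finset.disjoint_left.1 (hM.1 f1 hf1M f2 hf2M hne)) hv1f (h ▸ hv2f)
          have hall : ∀ x ∈ G.ends e, x ∈ VM M := by
            intro x hx
            rw [hab, Sym2.mem_iff] at hx hv1e hv2e
            have hm1 : v1 ∈ VM M := mem_VM_of hf1M hv1f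
            have hm2 : v2 ∈ VM M := mem_VM_of hf2M hv2f
            rcases hx with rfl | rfl
            · rcases hv1e with h1 | h1
              · exact h1 ▸ hm1
              · rcases hv2e with h2 | h2
                · exact h2 ▸ hm2
                · exact absurd (h1.trans h2.symm) hv12
            · rcases hv1e with h1 | h1
              · rcases hv2e with h2 | h2
                · exact absurd (h1.trans h2.symm) hv12
                · exact h2 ▸ hm2
              · exact h1 ▸ hm1
          obtain ⟨g, hg, hsub⟩ := hM.2.2.2 e hall
          have he1 : f1 = g := eq_of_mem_inter hM hf1M hg hv1f (hsub v1 hv1e)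
          have he2 : f2 = g := eq_of_mem_inter hM hf2M hg hv2f (hsub v2 hv2e)
          exact hne (he1.trans he2.symm)
        omega
      have hres := ih (Function.update m e (m e - 1))
        (M.filter fun f => ∀ v ∈ f, 2 ≤ G.deg (Function.update m e (m e - 1)) v)
        (by omega) hconn' (eardrum_subset hM hM'sub)
        (fun f hf => hP f (hM'sub hf)) hdeg'
      have hmu := mu_mono (G := G) hM'sub
      omega
    · push_neg at hcyc
      exact tree_case hconn hcyc hM hP hdeg

end Aux

theorem _root_.Graph.stmt_16 {V E : Type} [Fintype V] [Fintype E] [DecidableEq V] [DecidableEq E]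
    (G : MGraph V E) (hG : G.Connected)
    (T : Finset V) (hT : Even T.card)
    (M : Finset (Finset V)) (hM : G.IsEardrum M)
    (hMT : Disjoint (VM M) T)
    (hP : ∀ f ∈ M, ∃ P : Ear V E, G.IsPathInn f P)
    (m : E → ℕ) (hm : G.IsConnTJoin T m) :
    Fintype.card V + M.card ≤ size m + G.mu M + 1 := by
  obtain ⟨hsub2, hconn, hparity⟩ := hm
  have hdeg2 : ∀ v ∈ VM M, 2 ≤ G.deg m v := by
    intro v hv
    obtain ⟨f, hf, hvf⟩ := mem_VM_iff.1 hv
    obtain ⟨P, hPi⟩ := hP f hf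
    obtain ⟨x, hx⟩ := exists_root hM hf hPi
    have hxv : x ≠ v := fun h => hx (h ▸ hv)
    have h1 : 1 ≤ G.deg m v := by
      rcases (hconn v x).cases_head with h | ⟨c, ⟨e, he, hends⟩, -⟩
      · exact absurd h.symm hxv
      · exact le_deg he (by rw [hends]; exact Sym2.mem_iff.2 (Or.inl rfl))
    have heven : Even (G.deg m v) := by
      have hvT : v ∉ T := fun h => (Finset.disjoint_left.1 hMT hv) h
      rcases Nat.even_or_odd (G.deg m v) with h | h
      · exact h
      · exact absurd ((hparity v).2 h) hvT
    obtain ⟨k, hk⟩ := heven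
    omega
  exact main_ind G (size m) m M le_rfl hconn hM hP hdeg2

end MGraph
end
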